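/- Let E be a centered A-A-bimodule, g a pseudo-Riemannian bilinear metric on E with E finitely generated projective over A, σ the canonical flip, and P_sym = (1+σ)/2 with Sym := Ran(P_sym). Then V_{g⁽²⁾} restricts to an isomorphism from Sym onto Sym* (identified with {φ ∈ (E⊗_A E)* : φ ∘ (1 − P_sym) = 0}). -/

import Mathlib

open MulOpposite

/-- Let `E` be a centered `A`-`A`-bimodule, finitely generated projective
as a right `A`-module, `g` a pseudo-Riemannian bilinear metric on `E`, `σ` the canonical
flip on `E ⊗_A E` and `P_sym = (1+σ)/2` (characterized by `2·P_sym = 1 + σ` and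
idempotency) with `Sym := Ran(P_sym)` (the fixed points of `P_sym`).  Then `V_{g⁽²⁾}`
restricts to an isomorphism from `Sym` onto `Sym*`, the latter identified with
`{φ ∈ (E ⊗_A E)* : φ ∘ (1 − P_sym) = 0}`: for every right `A`-linear functional `φ` on
`E ⊗_A E` vanishing on `Ran(1 − P_sym)` there is a unique `y` with `P_sym y = y` and
`g⁽²⁾(y ⊗ ·) = φ`.  Here `T` with `tmul` plays the role of `E ⊗_A E`. -/
theorem Vg2_restricts_to_iso_on_Sym
    {A E T : Type*} [Ring A] [AddCommGroup E] [Module A E] [Module Aᵐᵒᵖ E]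
    [SMulCommClass A Aᵐᵒᵖ E]
    [AddCommGroup T] [Module A T] [Module Aᵐᵒᵖ T] [SMulCommClass A Aᵐᵒᵖ T]
    [Module.Finite Aᵐᵒᵖ E] [Module.Projective Aᵐᵒᵖ E]
    (h2A : ∀ a : A, a + a = 0 → a = 0)
    (h2T : ∀ x : T, x + x = 0 → x = 0)
    (hcent : Submodule.span Aᵐᵒᵖ {e : E | ∀ b : A, b • e = op b • e} = ⊤)
    (tmul : E → E → T)
    (htl : ∀ e e' f : E, tmul (e + e') f = tmul e f + tmul e' f)
    (htr : ∀ e f f' : E, tmul e (f + f') = tmul e f + tmul e f')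
    (htbal : ∀ (a : A) (e f : E), tmul (op a • e) f = tmul e (a • f))
    (htA : ∀ (a : A) (e f : E), a • tmul e f = tmul (a • e) f)
    (htAop : ∀ (a : A) (e f : E), op a • tmul e f = tmul e (op a • f))
    (huniv : ∀ (P : Type*) [AddCommGroup P] (φ : E → E → P),
      (∀ e e' f : E, φ (e + e') f = φ e f + φ e' f) →
      (∀ e f f' : E, φ e (f + f') = φ e f + φ e f') →
      (∀ (a : A) (e f : E), φ (op a • e) f = φ e (a • f)) →
      ∃! Φ : T →+ P, ∀ e f : E, Φ (tmul e f) = φ e f)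
    (σ : T → T)
    (hσadd : ∀ x y : T, σ (x + y) = σ x + σ y)
    (hσA : ∀ (a : A) (x : T), σ (a • x) = a • σ x)
    (hσAop : ∀ (a : A) (x : T), σ (op a • x) = op a • σ x)
    (hσflip : ∀ ω η : E, (∀ b : A, b • ω = op b • ω) → (∀ b : A, b • η = op b • η) →
        σ (tmul ω η) = tmul η ω)
    (hσinv : ∀ x : T, σ (σ x) = x)
    (Psym : T → T)
    (hPadd : ∀ x y : T, Psym (x + y) = Psym x + Psym y)
    (hP2 : ∀ x : T, Psym x + Psym x = x + σ x)
    (hPidem : ∀ x : T, Psym (Psym x) = Psym x)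
    (g : E → E → A)
    (hgaddl : ∀ e e' f, g (e + e') f = g e f + g e' f)
    (hgaddr : ∀ e f f', g e (f + f') = g e f + g e f')
    (hgbal : ∀ (a : A) (e f : E), g (op a • e) f = g e (a • f))
    (hgA : ∀ (a : A) (e f : E), g (a • e) f = a * g e f)
    (hgAop : ∀ (a : A) (e f : E), g e (op a • f) = g e f * a)
    (hgsym : ∀ ω η : E, (∀ b : A, b • ω = op b • ω) → (∀ b : A, b • η = op b • η) →
      ∀ a : A, g ω (op a • η) = g η (op a • ω))
    (hgnondeg : ∀ φ : E →ₗ[Aᵐᵒᵖ] A, ∃! e : E, ∀ f, g e f = φ f)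
    (g2 : T → T → A)
    (hg2addl : ∀ x x' y : T, g2 (x + x') y = g2 x y + g2 x' y)
    (hg2addr : ∀ x y y' : T, g2 x (y + y') = g2 x y + g2 x y')
    (hg2def : ∀ e f e' f' : E,
      g2 (tmul e f) (tmul e' f') = g e ((g f e') • f')) :
    ∀ φ : T →ₗ[Aᵐᵒᵖ] A, (∀ x : T, φ (Psym x) = φ x) →
      ∃! y : T, Psym y = y ∧ ∀ x : T, g2 y x = φ x := by
  classical
  intro φ hφP
  set Cent : Set E := {e : E | ∀ b : A, b • e = op b • e} with hCentdef
  -- basic zero/neg lemmas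
  have tmul_zero_left : ∀ f : E, tmul 0 f = 0 := by
    intro f; have h := htl 0 0 f; rw [add_zero] at h; exact (left_eq_add.mp h)
  have tmul_zero_right : ∀ e : E, tmul e 0 = 0 := by
    intro e; have h := htr e 0 0; rw [add_zero] at h; exact (left_eq_add.mp h)
  have tmul_neg_left : ∀ u v : E, tmul (-u) v = -(tmul u v) := by
    intro u v
    have h : tmul u v + tmul (-u) v = 0 := by
      rw [← htl, add_neg_cancel, tmul_zero_left]
    exact (neg_eq_of_add_eq_zero_right h).symm
  have g_zero_left : ∀ f : E, g 0 f = 0 := by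
    intro f; have h := hgaddl 0 0 f; rw [add_zero] at h; exact (left_eq_add.mp h)
  have g_zero_right : ∀ e : E, g e 0 = 0 := by
    intro e; have h := hgaddr e 0 0; rw [add_zero] at h; exact (left_eq_add.mp h)
  have g_neg_left : ∀ u f : E, g (-u) f = -(g u f) := by
    intro u f
    have h : g u f + g (-u) f = 0 := by rw [← hgaddl, add_neg_cancel, g_zero_left]
    exact (neg_eq_of_add_eq_zero_right h).symm
  have g2_zero_left : ∀ x : T, g2 0 x = 0 := by
    intro x; have h := hg2addl 0 0 x; rw [add_zero] at h; exact (left_eq_add.mp h)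
  have g2_zero_right : ∀ x : T, g2 x 0 = 0 := by
    intro x; have h := hg2addr x 0 0; rw [add_zero] at h; exact (left_eq_add.mp h)
  have g2_neg_left : ∀ y x : T, g2 (-y) x = -(g2 y x) := by
    intro y x
    have h : g2 y x + g2 (-y) x = 0 := by rw [← hg2addl, add_neg_cancel, g2_zero_left]
    exact (neg_eq_of_add_eq_zero_right h).symm
  have g2_neg_right : ∀ y x : T, g2 y (-x) = -(g2 y x) := by
    intro y x
    have h : g2 y x + g2 y (-x) = 0 := by rw [← hg2addr, add_neg_cancel, g2_zero_right]
    exact (neg_eq_of_add_eq_zero_right h).symm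
  have sigma_zero : σ 0 = 0 := by
    have h := hσadd 0 0; rw [add_zero] at h; exact (left_eq_add.mp h)
  -- spanning of T by elementary tensors, via the universal property and characters
  have hgen : ∀ y : T,
      y ∈ AddSubgroup.closure {x : T | ∃ u v, x = tmul u v} := by
    intro y
    by_contra hy
    set S : AddSubgroup T := AddSubgroup.closure {x : T | ∃ u v, x = tmul u v} with hS
    have hyQ : (QuotientAddGroup.mk' S) y ≠ 0 := by
      intro h0
      exact hy ((QuotientAddGroup.eq_zero_iff y).mp h0)
    obtain ⟨c, hcne⟩ := CharacterModule.exists_character_apply_ne_zero_of_ne_zero hyQ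
    let c' : (T ⧸ S) →+ AddCircle (1 : ℚ) := c
    obtain ⟨Φ, hΦ, hΦu⟩ := huniv (ULift (AddCircle (1 : ℚ))) (fun _ _ => 0)
      (by intros; simp) (by intros; simp) (by intros; simp)
    have h1 := hΦu (AddEquiv.ulift.symm.toAddMonoidHom.comp
        (c'.comp (QuotientAddGroup.mk' S)))
      (by
        intro e f
        have h2 : QuotientAddGroup.mk' S (tmul e f) = 0 :=
          (QuotientAddGroup.eq_zero_iff _).mpr (AddSubgroup.subset_closure ⟨e, f, rfl⟩)
        simp [AddMonoidHom.comp_apply, h2])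
    have h0 := hΦu 0 (fun e f => rfl)
    have h3 := h1.trans h0.symm
    have h4 := DFunLike.congr_fun h3 y
    simp only [AddMonoidHom.comp_apply, AddMonoidHom.zero_apply] at h4
    apply hcne
    have h5 := congrArg AddEquiv.ulift h4
    simp [c'] at h5
    exact h5
  -- additive induction over elementary tensors
  have hTind0 : ∀ p : T → Prop, p 0 → (∀ a b, p a → p b → p (a + b)) →
      (∀ a, p a → p (-a)) → (∀ u v : E, p (tmul u v)) → ∀ y, p y := by
    intro p h0 hadd hneg hbase y
    refine AddSubgroup.closure_induction (p := fun x _ => p x) ?_ h0 ?_ ?_ (hgen y)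
    · rintro x ⟨u, v, rfl⟩; exact hbase u v
    · intro a b _ _ ha hb; exact hadd a b ha hb
    · intro a _ ha; exact hneg a ha
  -- right op-scalar rule for g2 in the second slot
  have L1 : ∀ (a : A) (y x : T), g2 y (op a • x) = g2 y x * a := by
    intro a y x
    refine hTind0 (fun x => ∀ y, g2 y (op a • x) = g2 y x * a) ?_ ?_ ?_ ?_ x y
    · beta_reduce
      intro y; rw [smul_zero, g2_zero_right, zero_mul]
    · beta_reduce
      intro b b' hb hb' y; rw [smul_add, hg2addr, hg2addr, hb, hb', add_mul]
    · beta_reduce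
      intro b hb y; rw [smul_neg, g2_neg_right, g2_neg_right, hb, neg_mul]
    · intro e f y
      refine hTind0 (fun y => g2 y (op a • tmul e f) = g2 y (tmul e f) * a)
        ?_ ?_ ?_ ?_ y
      · beta_reduce
        rw [g2_zero_left, g2_zero_left, zero_mul]
      · beta_reduce
        intro b b' hb hb'; rw [hg2addl, hg2addl, hb, hb', add_mul]
      · beta_reduce
        intro b hb; rw [g2_neg_left, g2_neg_left, hb, neg_mul]
      · beta_reduce
        intro u v
        rw [htAop, hg2def, hg2def, smul_comm, hgAop]
  -- balancedness of g2
  have L2 : ∀ (a : A) (y x : T), g2 (op a • y) x = g2 y (a • x) := by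
    intro a y x
    refine hTind0 (fun y => ∀ x, g2 (op a • y) x = g2 y (a • x)) ?_ ?_ ?_ ?_ y x
    · beta_reduce
      intro x; rw [smul_zero, g2_zero_left, g2_zero_left]
    · beta_reduce
      intro b b' hb hb' x; rw [smul_add, hg2addl, hg2addl, hb, hb']
    · beta_reduce
      intro b hb x; rw [smul_neg, g2_neg_left, g2_neg_left, hb]
    · intro u v x
      refine hTind0 (fun x => g2 (op a • tmul u v) x = g2 (tmul u v) (a • x))
        ?_ ?_ ?_ ?_ x
      · beta_reduce
        rw [smul_zero, g2_zero_right, g2_zero_right]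
      · beta_reduce
        intro b b' hb hb'; rw [smul_add, hg2addr, hg2addr, hb, hb']
      · beta_reduce
        intro b hb; rw [smul_neg, g2_neg_right, g2_neg_right, hb]
      · beta_reduce
        intro e f
        rw [htAop, htA, hg2def, hg2def, hgbal]
  -- membership of everything in the span of Cent
  have hmemCent : ∀ e : E, e ∈ Submodule.span Aᵐᵒᵖ Cent := by
    intro e; rw [hCentdef, hcent]; trivial
  -- symmetry of g against centered elements
  have gsym1 : ∀ η : E, η ∈ Cent → ∀ x : E, g η x = g x η := by
    intro η hη x
    refine Submodule.span_induction (p := fun x _ => g η x = g x η) ?_ ?_ ?_ ?_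
      (hmemCent x)
    · beta_reduce
      intro ω hω
      have h := hgsym ω η hω hη 1
      rw [op_one, one_smul, one_smul] at h
      exact h.symm
    · beta_reduce
      rw [g_zero_right, g_zero_left]
    · beta_reduce
      intro b b' _ _ hb hb'; rw [hgaddr, hgaddl, hb, hb']
    · beta_reduce
      intro m b _ hb
      obtain ⟨a, rfl⟩ : ∃ a : A, m = op a := ⟨m.unop, rfl⟩
      rw [hgAop, hb, hgbal, hη a, hgAop]
  -- centrality of g on centered pairs
  have gcent : ∀ ω ω' : E, ω ∈ Cent → ω' ∈ Cent → ∀ β : A,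
      β * g ω ω' = g ω ω' * β := by
    intro ω ω' hω hω' β
    rw [← hgA, hω β, hgbal, hω' β, hgAop]
  -- extraction of scalars against centered first arguments
  have gpull : ∀ (α : A) (η η' : E), η ∈ Cent → g η (α • η') = α * g η η' := by
    intro α η η' hη
    rw [← hgbal, ← hη α, hgA]
  -- cancellation from nondegeneracy
  have gcancel : ∀ u v : E, (∀ f, g u f = g v f) → u = v := by
    intro u v h
    obtain ⟨e₀, he₀, hu⟩ := hgnondeg
      { toFun := fun f => g v f
        map_add' := fun f f' => hgaddr v f f'
        map_smul' := by
          intro m f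
          obtain ⟨a, rfl⟩ : ∃ a : A, m = op a := ⟨m.unop, rfl⟩
          simp only [RingHom.id_apply]
          rw [hgAop]
          rfl }
    have h1 : u = e₀ := hu u (fun f => h f)
    have h2 : v = e₀ := hu v (fun f => rfl)
    rw [h1, h2]
  -- finite centered generating family
  obtain ⟨sgen, hsgen⟩ := Module.Finite.fg_top (R := Aᵐᵒᵖ) (M := E)
  choose fT hfT1 hfT2 using fun x : E => Submodule.mem_span_finite_of_mem_span (hmemCent x)
  set tt : Finset E := sgen.biUnion fT with htt
  have httsub : (↑tt : Set E) ⊆ Cent := by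
    intro x hx
    rw [Finset.mem_coe, htt, Finset.mem_biUnion] at hx
    obtain ⟨y, hy, hxy⟩ := hx
    exact hfT1 y hxy
  have httspan : Submodule.span Aᵐᵒᵖ (↑tt : Set E) = ⊤ := by
    refine top_unique ?_
    rw [← hsgen]
    refine Submodule.span_le.mpr ?_
    intro x hx
    refine Submodule.span_mono ?_ (hfT2 x)
    intro z hz
    rw [Finset.mem_coe] at hz ⊢
    rw [htt]
    exact Finset.mem_biUnion.mpr ⟨x, Finset.mem_coe.mp hx, hz⟩
  -- a projective section gives a dual system
  let π : ({z : E // z ∈ tt} → Aᵐᵒᵖ) →ₗ[Aᵐᵒᵖ] E :=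
    { toFun := fun l => ∑ j : {z : E // z ∈ tt}, l j • (j : E)
      map_add' := by
        intro l l'
        simp only [Pi.add_apply, add_smul]
        rw [Finset.sum_add_distrib]
      map_smul' := by
        intro m l
        simp only [Pi.smul_apply, smul_eq_mul, RingHom.id_apply, mul_smul]
        rw [Finset.smul_sum] }
  have hπsurj : Function.Surjective π := by
    intro x
    have hle : Submodule.span Aᵐᵒᵖ (↑tt : Set E) ≤ LinearMap.range π := by
      refine Submodule.span_le.mpr ?_
      intro z hz
      refine ⟨Pi.single ⟨z, Finset.mem_coe.mp hz⟩ 1, ?_⟩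
      show (∑ j : {z : E // z ∈ tt},
        Pi.single (⟨z, Finset.mem_coe.mp hz⟩ : {z : E // z ∈ tt}) 1 j • (j : E)) = z
      rw [Finset.sum_eq_single (⟨z, Finset.mem_coe.mp hz⟩ : {z : E // z ∈ tt})]
      · rw [Pi.single_eq_same, one_smul]
      · intro b _ hb; rw [Pi.single_eq_of_ne hb, zero_smul]
      · intro hmem; exact absurd (Finset.mem_univ _) hmem
    obtain ⟨l, hl⟩ := hle (httspan ▸ Submodule.mem_top)
    exact ⟨l, hl⟩
  obtain ⟨sec, hsec⟩ := Module.projective_lifting_property π LinearMap.id hπsurj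
  have hsec' : ∀ x : E, ∑ j : {z : E // z ∈ tt}, sec x j • (j : E) = x := by
    intro x
    have h := DFunLike.congr_fun hsec x
    simp only [LinearMap.comp_apply, LinearMap.id_apply] at h
    exact h
  have hwexd : ∀ j : {z : E // z ∈ tt}, ∃ d : E, ∀ x, g d x = unop (sec x j) := by
    intro j
    exact (hgnondeg
      { toFun := fun x => unop (sec x j)
        map_add' := by
          intro x x'
          beta_reduce
          rw [map_add]
          simp
        map_smul' := by
          intro m x
          simp only [RingHom.id_apply]
          rw [map_smul]
          simp [MulOpposite.smul_eq_mul_unop] }).exists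
  choose cdual hcd using hwexd
  have keyA : ∀ x : E, ∑ j : {z : E // z ∈ tt}, op (g (cdual j) x) • (j : E) = x := by
    intro x
    have h : ∀ j : {z : E // z ∈ tt}, op (g (cdual j) x) = sec x j := by
      intro j; rw [hcd j x]; exact MulOpposite.op_unop _
    calc ∑ j : {z : E // z ∈ tt}, op (g (cdual j) x) • (j : E)
        = ∑ j : {z : E // z ∈ tt}, sec x j • (j : E) :=
          Finset.sum_congr rfl (fun j _ => by rw [h j])
      _ = x := hsec' x
  have hcentj : ∀ j : {z : E // z ∈ tt}, ∀ b : A, b • (j : E) = op b • (j : E) :=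
    fun j => httsub (Finset.mem_coe.mpr j.2)
  -- expansion of elementary tensors over the centered family
  have hexp : ∀ e f : E,
      tmul e f = ∑ j : {z : E // z ∈ tt}, tmul (op (g (cdual j) f) • e) (j : E) := by
    intro e f
    conv_lhs => rw [← keyA f]
    have hsum : tmul e (∑ j : {z : E // z ∈ tt}, op (g (cdual j) f) • (j : E))
        = ∑ j : {z : E // z ∈ tt}, tmul e (op (g (cdual j) f) • (j : E)) :=
      map_sum (AddMonoidHom.mk' (tmul e) (htr e)) _ _
    rw [hsum]
    refine Finset.sum_congr rfl (fun j _ => ?_)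
    rw [← hcentj j (g (cdual j) f), ← htbal]
  -- induction over tensors with centered second slot
  have hTind : ∀ p : T → Prop, p 0 → (∀ a b, p a → p b → p (a + b)) →
      (∀ a, p a → p (-a)) → (∀ u η : E, η ∈ Cent → p (tmul u η)) → ∀ y, p y := by
    intro p h0 hadd hneg hbase y
    refine hTind0 p h0 hadd hneg ?_ y
    intro u v
    rw [hexp u v]
    refine Finset.sum_induction _ p hadd h0 ?_
    intro j _
    exact hbase _ _ (httsub (Finset.mem_coe.mpr j.2))
  -- the "lowering" operator D
  have hDex : ∀ (y : T) (e : E), ∃ d : E, ∀ f, g d f = g2 y (tmul e f) := by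
    intro y e
    exact (hgnondeg
      { toFun := fun f => g2 y (tmul e f)
        map_add' := by intro f f'; beta_reduce; rw [htr, hg2addr]
        map_smul' := by
          intro m f
          obtain ⟨a, rfl⟩ : ∃ a : A, m = op a := ⟨m.unop, rfl⟩
          simp only [RingHom.id_apply]
          rw [← htAop, L1]
          rfl }).exists
  choose Dfun hDy using hDex
  have hDtmul : ∀ u v e : E, Dfun (tmul u v) e = op (g v e) • u := by
    intro u v e
    refine gcancel _ _ (fun f => ?_)
    rw [hDy, hg2def, hgbal]
  have hDadd : ∀ (y y' : T) (e : E), Dfun (y + y') e = Dfun y e + Dfun y' e := by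
    intro y y' e
    refine gcancel _ _ (fun f => ?_)
    rw [hDy, hg2addl, hgaddl, hDy, hDy]
  have hDzero : ∀ e : E, Dfun 0 e = 0 := by
    intro e
    refine gcancel _ _ (fun f => ?_)
    rw [hDy, g2_zero_left, g_zero_left]
  have hDneg : ∀ (y : T) (e : E), Dfun (-y) e = -(Dfun y e) := by
    intro y e
    refine gcancel _ _ (fun f => ?_)
    rw [hDy, g2_neg_left, g_neg_left, hDy]
  -- reconstruction formula
  have L8 : ∀ y : T, y = ∑ j : {z : E // z ∈ tt}, tmul (Dfun y (cdual j)) (j : E) := by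
    intro y
    refine hTind (fun y => y = ∑ j : {z : E // z ∈ tt}, tmul (Dfun y (cdual j)) (j : E))
      ?_ ?_ ?_ ?_ y
    · beta_reduce
      simp only [hDzero, tmul_zero_left, Finset.sum_const_zero]
    · beta_reduce
      intro a b ha hb
      simp only [hDadd, htl]
      rw [Finset.sum_add_distrib, ← ha, ← hb]
    · beta_reduce
      intro a ha
      simp only [hDneg, tmul_neg_left]
      rw [Finset.sum_neg_distrib, ← ha]
    · beta_reduce
      intro u η hη
      have h : ∀ j : {z : E // z ∈ tt}, tmul (Dfun (tmul u η) (cdual j)) (j : E)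
          = tmul (op (g (cdual j) η) • u) (j : E) := by
        intro j
        rw [hDtmul, gsym1 η hη]
      rw [Finset.sum_congr rfl (fun j _ => h j), ← hexp u η]
  -- injectivity
  have hinj : ∀ y y' : T, (∀ x, g2 y x = g2 y' x) → y = y' := by
    intro y y' h
    have hD : ∀ j : {z : E // z ∈ tt}, Dfun y (cdual j) = Dfun y' (cdual j) := by
      intro j
      exact gcancel _ _ (fun f => by rw [hDy, hDy, h])
    rw [L8 y, L8 y']
    exact Finset.sum_congr rfl (fun j _ => by rw [hD j])
  -- everything lies in the span of centered elementary tensors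
  have hsσ : ∀ x : T, x ∈ Submodule.span Aᵐᵒᵖ
      {x : T | ∃ ω η, ω ∈ Cent ∧ η ∈ Cent ∧ x = tmul ω η} := by
    intro x
    refine hTind0 (fun x => x ∈ Submodule.span Aᵐᵒᵖ
        {x : T | ∃ ω η, ω ∈ Cent ∧ η ∈ Cent ∧ x = tmul ω η})
      (Submodule.zero_mem _) (fun a b ha hb => Submodule.add_mem _ ha hb)
      (fun a ha => Submodule.neg_mem _ ha) ?_ x
    intro u v
    refine Submodule.span_induction
      (p := fun u _ => ∀ v : E, tmul u v ∈ Submodule.span Aᵐᵒᵖ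
        {x : T | ∃ ω η, ω ∈ Cent ∧ η ∈ Cent ∧ x = tmul ω η}) ?_ ?_ ?_ ?_ (hmemCent u) v
    · intro ω hω v
      refine Submodule.span_induction
        (p := fun v _ => tmul ω v ∈ Submodule.span Aᵐᵒᵖ
          {x : T | ∃ ω' η, ω' ∈ Cent ∧ η ∈ Cent ∧ x = tmul ω' η}) ?_ ?_ ?_ ?_ (hmemCent v)
      · beta_reduce
        intro η hη
        exact Submodule.subset_span ⟨ω, η, hω, hη, rfl⟩
      · beta_reduce
        rw [tmul_zero_right]; exact Submodule.zero_mem _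
      · beta_reduce
        intro b b' _ _ hb hb'
        beta_reduce at hb hb'
        rw [htr]; exact Submodule.add_mem _ hb hb'
      · beta_reduce
        intro m b _ hb
        beta_reduce at hb
        obtain ⟨a, rfl⟩ : ∃ a : A, m = op a := ⟨m.unop, rfl⟩
        rw [← htAop]
        exact Submodule.smul_mem _ _ hb
    · beta_reduce
      intro v; rw [tmul_zero_left]; exact Submodule.zero_mem _
    · beta_reduce
      intro b b' _ _ hb hb' v
      beta_reduce at hb hb'
      rw [htl]; exact Submodule.add_mem _ (hb v) (hb' v)
    · beta_reduce
      intro m b _ hb v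
      beta_reduce at hb
      obtain ⟨a, rfl⟩ : ∃ a : A, m = op a := ⟨m.unop, rfl⟩
      rw [htbal]
      exact hb (a • v)
  -- σ is self-adjoint for g2
  have L3 : ∀ y x : T, g2 (σ y) x = g2 y (σ x) := by
    intro y x
    refine Submodule.span_induction
      (p := fun y _ => ∀ x, g2 (σ y) x = g2 y (σ x)) ?_ ?_ ?_ ?_ (hsσ y) x
    · beta_reduce
      rintro y' ⟨ω, η, hω, hη, rfl⟩ x
      refine Submodule.span_induction
        (p := fun x _ => g2 (σ (tmul ω η)) x = g2 (tmul ω η) (σ x)) ?_ ?_ ?_ ?_ (hsσ x)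
      · beta_reduce
        rintro x' ⟨ω', η', hω', hη', rfl⟩
        rw [hσflip ω η hω hη, hσflip ω' η' hω' hη', hg2def, hg2def,
          gpull (g ω ω') η η' hη, gpull (g η η') ω ω' hω]
        exact (gcent ω ω' hω hω' (g η η')).symm
      · beta_reduce
        rw [sigma_zero, g2_zero_right, g2_zero_right]
      · beta_reduce
        intro b b' _ _ hb hb'; rw [hσadd, hg2addr, hg2addr, hb, hb']
      · beta_reduce
        intro m b _ hb
        obtain ⟨a, rfl⟩ : ∃ a : A, m = op a := ⟨m.unop, rfl⟩
        rw [L1, hb, hσAop, L1]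
    · beta_reduce
      intro x; rw [sigma_zero, g2_zero_left, g2_zero_left]
    · beta_reduce
      intro b b' _ _ hb hb' x
      beta_reduce at hb hb'
      rw [hσadd, hg2addl, hg2addl, hb x, hb' x]
    · beta_reduce
      intro m b _ hb x
      beta_reduce at hb
      obtain ⟨a, rfl⟩ : ∃ a : A, m = op a := ⟨m.unop, rfl⟩
      rw [hσAop, L2, hb (a • x), hσA, L2]
  -- construction of the solution
  have hwex : ∀ e : E, ∃ d : E, ∀ f, g d f = φ (tmul e f) := by
    intro e
    exact (hgnondeg
      { toFun := fun f => φ (tmul e f)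
        map_add' := by intro f f'; beta_reduce; rw [htr, map_add]
        map_smul' := by
          intro m f
          obtain ⟨a, rfl⟩ : ∃ a : A, m = op a := ⟨m.unop, rfl⟩
          simp only [RingHom.id_apply]
          rw [← htAop, map_smul] }).exists
  choose w hw using hwex
  set y₀ : T := ∑ j : {z : E // z ∈ tt}, tmul (w (j : E)) (cdual j) with hy₀def
  have hy₀ : ∀ x : T, g2 y₀ x = φ x := by
    refine hTind0 (fun x => g2 y₀ x = φ x) ?_ ?_ ?_ ?_
    · beta_reduce
      rw [g2_zero_right, map_zero]
    · beta_reduce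
      intro a b ha hb; rw [hg2addr, map_add, ha, hb]
    · beta_reduce
      intro a ha; rw [g2_neg_right, map_neg, ha]
    · beta_reduce
      intro e f
      have h1 : g2 y₀ (tmul e f)
          = ∑ j : {z : E // z ∈ tt}, g2 (tmul (w (j : E)) (cdual j)) (tmul e f) := by
        rw [hy₀def]
        exact map_sum (AddMonoidHom.mk' (fun z => g2 z (tmul e f))
          (fun a b => hg2addl a b (tmul e f))) _ _
      rw [h1]
      have h2 : ∀ j : {z : E // z ∈ tt}, g2 (tmul (w (j : E)) (cdual j)) (tmul e f)
          = φ (tmul ((j : E)) ((g (cdual j) e) • f)) := by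
        intro j
        rw [hg2def, hw]
      rw [Finset.sum_congr rfl (fun j _ => h2 j)]
      have h3 : ∀ j : {z : E // z ∈ tt}, tmul ((j : E)) ((g (cdual j) e) • f)
          = tmul (op (g (cdual j) e) • (j : E)) f := by
        intro j; rw [htbal]
      rw [Finset.sum_congr rfl (fun j _ => by rw [h3 j])]
      have h5 : (∑ j : {z : E // z ∈ tt}, φ (tmul (op (g (cdual j) e) • (j : E)) f))
          = φ (∑ j : {z : E // z ∈ tt}, tmul (op (g (cdual j) e) • (j : E)) f) :=
        (map_sum φ.toAddMonoidHom _ _).symm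
      have h4 : (∑ j : {z : E // z ∈ tt}, tmul (op (g (cdual j) e) • (j : E)) f)
          = tmul (∑ j : {z : E // z ∈ tt}, op (g (cdual j) e) • (j : E)) f :=
        (map_sum (AddMonoidHom.mk' (fun z => tmul z f) (fun a b => htl a b f)) _ _).symm
      rw [h5, h4, keyA e]
  -- φ is invariant under σ
  have φσ : ∀ x : T, φ (σ x) = φ x := by
    intro x
    have h := congrArg φ (hP2 x)
    rw [map_add, map_add, hφP x] at h
    exact (add_left_cancel h).symm
  -- the solution is symmetric
  have hPfix : Psym y₀ = y₀ := by
    apply hinj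
    intro x
    have hA1 : g2 (Psym y₀) x + g2 (Psym y₀) x = φ x + φ (σ x) := by
      rw [← hg2addl, hP2, hg2addl, L3, hy₀ x, hy₀ (σ x)]
    have hA2 : φ x + φ (σ x) = g2 y₀ x + g2 y₀ x := by
      rw [φσ x, hy₀ x]
    have h2 := hA1.trans hA2
    have h3 := h2A (g2 (Psym y₀) x - g2 y₀ x) (by rw [sub_add_sub_comm, h2, sub_self])
    exact sub_eq_zero.mp h3
  refine ⟨y₀, ⟨hPfix, hy₀⟩, ?_⟩
  rintro y' ⟨_, hy'⟩
  exact hinj y' y₀ (fun x => by rw [hy' x, hy₀ x])
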